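/- Let (X,d) be an isometrically homogeneous ultrametric space with finite distance scale d(X × X) = {ε_0, ε_1, …, ε_n} where 0 = ε_0 < ε_1 < … < ε_n, and for ε ≥ 0 let E_ε = {(x,y) ∈ X × X : d(x,y) ≤ ε}. Then every kaleidoscopical configuration K in X (with respect to the action of the isometry group Iso(X)) is (E_{ε_0}, E_{ε_1}, …, E_{ε_n})-splittable: for every i < n the set K is E_{ε_{i+1}}/E_{ε_i}-parallel or E_{ε_{i+1}}/E_{ε_i}-orthogonal. -/

import Mathlib

universe u

private lemma iso_exists {X : Type u} [MetricSpace X] (f g : X → X)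
    (hgf : ∀ z, g (f z) = z) (hfg : ∀ z, f (g z) = z)
    (hf : ∀ z w, dist (f z) (f w) ≤ dist z w)
    (hg : ∀ z w, dist (g z) (g w) ≤ dist z w) :
    ∃ σ : X ≃ᵢ X, ∀ z, σ z = f z := by
  have key : ∀ z w, dist (f z) (f w) = dist z w := by
    intro z w
    refine le_antisymm (hf z w) ?_
    have h := hg (f z) (f w)
    rwa [hgf, hgf] at h
  exact ⟨⟨⟨f, g, hgf, hfg⟩, Isometry.of_dist_eq key⟩, fun z => rfl⟩

/-- Local move gadget: given an isometry `u`, a point `p` and scale levels `r < R`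
(with the "gap" property that no distances lie strictly between `r` and `R`),
there is an isometry that agrees with `u` on the closed ball `B(p,r)` and is the
identity outside `B(p,r) ∪ B(u p, r)`. -/
private lemma local_move {X : Type u} [MetricSpace X]
    (hu : ∀ x y z : X, dist x z ≤ max (dist x y) (dist y z))
    (u : X ≃ᵢ X) (p : X) (r R : ℝ) (hr : 0 ≤ r)
    (hpu : dist p (u p) ≤ R)
    (hgap : ∀ z w : X, r < dist z w → dist z w ≤ R → dist z w = R) :
    ∃ σ : X ≃ᵢ X, (∀ z, dist z p ≤ r → σ z = u z) ∧
      (∀ z, ¬ dist z p ≤ r → ¬ dist z (u p) ≤ r → σ z = z) := by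
  by_cases hd : dist p (u p) ≤ r
  · -- rotation: `u` maps `B(p,r)` onto itself
    set f : X → X := fun z => if dist z p ≤ r then u z else z with hfdef
    set g : X → X := fun z => if dist z p ≤ r then u.symm z else z with hgdef
    have hdsymm : dist (u.symm p) p ≤ r := by
      have h := u.dist_eq (u.symm p) p
      rw [u.apply_symm_apply] at h
      rw [← h]; exact hd
    have hub : ∀ z, dist z p ≤ r → dist (u z) p ≤ r := by
      intro z hz
      refine le_trans (hu (u z) (u p) p) (max_le ?_ (by rw [dist_comm]; exact hd))
      rw [u.dist_eq]; exact hz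
    have hub' : ∀ z, dist z p ≤ r → dist (u.symm z) p ≤ r := by
      intro z hz
      refine le_trans (hu (u.symm z) (u.symm p) p) (max_le ?_ hdsymm)
      rw [u.symm.dist_eq]; exact hz
    have hgf : ∀ z, g (f z) = z := by
      intro z
      by_cases hz : dist z p ≤ r
      · simp only [hfdef, hgdef]
        rw [if_pos hz, if_pos (hub z hz), u.symm_apply_apply]
      · simp only [hfdef, hgdef]; rw [if_neg hz, if_neg hz]
    have hfg : ∀ z, f (g z) = z := by
      intro z
      by_cases hz : dist z p ≤ r
      · simp only [hfdef, hgdef]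
        rw [if_pos hz, if_pos (hub' z hz), u.apply_symm_apply]
      · simp only [hfdef, hgdef]; rw [if_neg hz, if_neg hz]
    have hsep : ∀ z w : X, dist z p ≤ r → ¬ dist w p ≤ r → r < dist z w := by
      intro z w hz hw
      by_contra h
      push_neg at h
      exact hw (le_trans (hu w z p) (max_le (by rw [dist_comm]; exact h) hz))
    have main : ∀ (v : X ≃ᵢ X), dist p (v p) ≤ r → ∀ z w : X,
        dist z p ≤ r → ¬ dist w p ≤ r → dist (v z) w ≤ dist z w := by
      intro v hv z w hz hw
      have h1 : dist z (v z) ≤ r :=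
        le_trans (hu z p (v z)) (max_le hz (le_trans (hu p (v p) (v z))
          (max_le hv (by rw [v.dist_eq, dist_comm]; exact hz))))
      refine le_trans (hu (v z) z w) (max_le ?_ le_rfl)
      rw [dist_comm]
      exact (lt_of_le_of_lt h1 (hsep z w hz hw)).le
    have hvsymm : dist p (u.symm p) ≤ r := by rw [dist_comm]; exact hdsymm
    have hfle : ∀ z w, dist (f z) (f w) ≤ dist z w := by
      intro z w
      by_cases hz : dist z p ≤ r <;> by_cases hw : dist w p ≤ r
      · simp only [hfdef]; rw [if_pos hz, if_pos hw]; exact le_of_eq (u.dist_eq z w)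
      · simp only [hfdef]; rw [if_pos hz, if_neg hw]; exact main u hd z w hz hw
      · simp only [hfdef]; rw [if_neg hz, if_pos hw]
        rw [dist_comm z (u w), dist_comm z w]
        exact main u hd w z hw hz
      · simp only [hfdef]; rw [if_neg hz, if_neg hw]
    have hgle : ∀ z w, dist (g z) (g w) ≤ dist z w := by
      intro z w
      by_cases hz : dist z p ≤ r <;> by_cases hw : dist w p ≤ r
      · simp only [hgdef]; rw [if_pos hz, if_pos hw]; exact le_of_eq (u.symm.dist_eq z w)
      · simp only [hgdef]; rw [if_pos hz, if_neg hw]; exact main u.symm hvsymm z w hz hw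
      · simp only [hgdef]; rw [if_neg hz, if_pos hw]
        rw [dist_comm z (u.symm w), dist_comm z w]
        exact main u.symm hvsymm w z hw hz
      · simp only [hgdef]; rw [if_neg hz, if_neg hw]
    obtain ⟨σ, hσ⟩ := iso_exists f g hgf hfg hfle hgle
    refine ⟨σ, ?_, ?_⟩
    · intro z hz; rw [hσ z]; simp only [hfdef]; rw [if_pos hz]
    · intro z hz _; rw [hσ z]; simp only [hfdef]; rw [if_neg hz]
  · -- swap: `u` maps `B(p,r)` onto the disjoint ball `B(u p, r)`
    have hdisj : ∀ z, dist z p ≤ r → ¬ dist z (u p) ≤ r := by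
      intro z hz h2
      exact hd (le_trans (hu p z (u p)) (max_le (by rw [dist_comm]; exact hz) h2))
    have hrR : r < R := lt_of_lt_of_le (not_le.mp hd) hpu
    set F : X → X := fun z => if dist z p ≤ r then u z
      else if dist z (u p) ≤ r then u.symm z else z with hFdef
    have hS2 : ∀ z, dist z p ≤ r → dist (u z) (u p) ≤ r := by
      intro z hz; rw [u.dist_eq]; exact hz
    have hS1 : ∀ z, dist z (u p) ≤ r → dist (u.symm z) p ≤ r := by
      intro z hz
      have h := u.dist_eq (u.symm z) p
      rw [u.apply_symm_apply] at h
      rw [← h]; exact hz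
    have hFF : ∀ z, F (F z) = z := by
      intro z
      by_cases hz1 : dist z p ≤ r
      · have h2 := hS2 z hz1
        have h1 : ¬ dist (u z) p ≤ r := fun hc => hdisj (u z) hc h2
        simp only [hFdef]
        rw [if_pos hz1, if_neg h1, if_pos h2, u.symm_apply_apply]
      · by_cases hz2 : dist z (u p) ≤ r
        · have h1 := hS1 z hz2
          simp only [hFdef]
          rw [if_neg hz1, if_pos hz2, if_pos h1, u.apply_symm_apply]
        · simp only [hFdef]
          rw [if_neg hz1, if_neg hz2, if_neg hz1, if_neg hz2]
    have hFself : ∀ z, dist z (F z) ≤ R := by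
      intro z
      by_cases hz1 : dist z p ≤ r
      · simp only [hFdef]; rw [if_pos hz1]
        refine le_trans (hu z p (u z)) (max_le (le_trans hz1 hrR.le) ?_)
        refine le_trans (hu p (u p) (u z)) (max_le hpu ?_)
        rw [u.dist_eq, dist_comm]
        exact le_trans hz1 hrR.le
      · by_cases hz2 : dist z (u p) ≤ r
        · simp only [hFdef]; rw [if_neg hz1, if_pos hz2]
          refine le_trans (hu z (u p) (u.symm z)) (max_le (le_trans hz2 hrR.le) ?_)
          refine le_trans (hu (u p) p (u.symm z)) (max_le (by rw [dist_comm]; exact hpu) ?_)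
          have h := u.dist_eq p (u.symm z)
          rw [u.apply_symm_apply] at h
          rw [← h, dist_comm]
          exact le_trans hz2 hrR.le
        · simp only [hFdef]; rw [if_neg hz1, if_neg hz2, dist_self]
          exact le_trans hr hrR.le
    have hsep : ∀ (q : X) (z w : X), dist z q ≤ r → ¬ dist w q ≤ r → r < dist z w := by
      intro q z w hz hw
      by_contra h
      push_neg at h
      exact hw (le_trans (hu w z q) (max_le (by rw [dist_comm]; exact h) hz))
    have hbig : ∀ z w : X, r < dist z w → R ≤ dist z w := by
      intro z w h
      by_cases h2 : dist z w ≤ R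
      · exact le_of_eq (hgap z w h h2).symm
      · exact (not_le.mp h2).le
    have hbound : ∀ z w, R ≤ dist z w → dist (F z) (F w) ≤ dist z w := by
      intro z w hZW
      refine le_trans (hu (F z) z (F w)) (max_le ?_ ?_)
      · rw [dist_comm]; exact le_trans (hFself z) hZW
      · exact le_trans (hu z w (F w)) (max_le le_rfl (le_trans (hFself w) hZW))
    have hFle : ∀ z w, dist (F z) (F w) ≤ dist z w := by
      intro z w
      by_cases hz1 : dist z p ≤ r <;> by_cases hw1 : dist w p ≤ r
      · simp only [hFdef]; rw [if_pos hz1, if_pos hw1]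
        exact le_of_eq (u.dist_eq z w)
      · exact hbound z w (hbig z w (hsep p z w hz1 hw1))
      · refine hbound z w (hbig z w ?_)
        rw [dist_comm]; exact hsep p w z hw1 hz1
      · by_cases hz2 : dist z (u p) ≤ r <;> by_cases hw2 : dist w (u p) ≤ r
        · simp only [hFdef]; rw [if_neg hz1, if_pos hz2, if_neg hw1, if_pos hw2]
          exact le_of_eq (u.symm.dist_eq z w)
        · exact hbound z w (hbig z w (hsep (u p) z w hz2 hw2))
        · refine hbound z w (hbig z w ?_)
          rw [dist_comm]; exact hsep (u p) w z hw2 hz2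
        · simp only [hFdef]; rw [if_neg hz1, if_neg hz2, if_neg hw1, if_neg hw2]
    obtain ⟨σ, hσ⟩ := iso_exists F F hFF hFF hFle hFle
    refine ⟨σ, ?_, ?_⟩
    · intro z hz
      rw [hσ z]; simp only [hFdef]; rw [if_pos hz]
    · intro z h1 h2
      rw [hσ z]; simp only [hFdef]; rw [if_neg h1, if_neg h2]

/-- Let `(X,d)` be an isometrically homogeneous ultrametric space with
finite distance scale `d(X × X) = {ε_0 < ε_1 < … < ε_n}` with `ε_0 = 0`. Then every
kaleidoscopical configuration `K` in `X` (with respect to the isometry group of `X`) is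
`(E_{ε_0}, …, E_{ε_n})`-splittable: for every `i < n` the set `K` is
`E_{ε_{i+1}}/E_{ε_i}`-parallel or `E_{ε_{i+1}}/E_{ε_i}`-orthogonal, where
`E_ε = {(x,y) : d(x,y) ≤ ε}` and the `E_ε`-class of `x` is the closed ball of radius `ε`
about `x`. -/
theorem stmt12 {X : Type u} [MetricSpace X]
    (hultra : ∀ x y z : X, dist x z ≤ max (dist x y) (dist y z))
    (hhom : ∀ x y : X, ∃ g : X ≃ᵢ X, g x = y)
    (n : ℕ) (ε : Fin (n + 1) → ℝ) (hε0 : ε 0 = 0) (hmono : StrictMono ε)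
    (hscale : {r : ℝ | ∃ x y : X, dist x y = r} = Set.range ε)
    (K : Set X)
    (hK : ∃ (C : Type u) (χ : X → C), Function.Surjective χ ∧
        ∀ g : X ≃ᵢ X, Set.BijOn χ (g '' K) Set.univ) :
    ∀ i : Fin n,
      (∀ x ∈ K, (⋃ k ∈ K, Metric.closedBall k (ε i.castSucc)) ∩
          Metric.closedBall x (ε i.succ) = Metric.closedBall x (ε i.succ)) ∨
      (∀ x ∈ K, (⋃ k ∈ K, Metric.closedBall k (ε i.castSucc)) ∩
          Metric.closedBall x (ε i.succ) = Metric.closedBall x (ε i.castSucc)) := by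
  classical
  intro i
  by_cases horth : ∀ x ∈ K, (⋃ k ∈ K, Metric.closedBall k (ε i.castSucc)) ∩
      Metric.closedBall x (ε i.succ) = Metric.closedBall x (ε i.castSucc)
  · exact Or.inr horth
  refine Or.inl ?_
  have h0r : (0:ℝ) ≤ ε i.castSucc := by
    rw [← hε0]; exact hmono.monotone (Fin.zero_le _)
  have hrR : ε i.castSucc < ε i.succ := hmono Fin.castSucc_lt_succ
  have hgap : ∀ z w : X, ε i.castSucc < dist z w → dist z w ≤ ε i.succ →
      dist z w = ε i.succ := by
    intro z w h1 h2
    have hmem : dist z w ∈ {r : ℝ | ∃ x y : X, dist x y = r} := ⟨z, w, rfl⟩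
    rw [hscale] at hmem
    obtain ⟨j, hj⟩ := hmem
    rw [← hj] at h1 h2 ⊢
    have hj1 : i.castSucc < j := hmono.lt_iff_lt.mp h1
    have hj2 : j ≤ i.succ := hmono.le_iff_le.mp h2
    have hje : j = i.succ := le_antisymm hj2 (Fin.castSucc_lt_iff_succ_le.mp hj1)
    rw [hje]
  -- failure of orthogonality yields a pair of `K`-points at distance `ε i.succ`
  push_neg at horth
  obtain ⟨x, hxK, hxne⟩ := horth
  have hsub : Metric.closedBall x (ε i.castSucc) ⊆
      (⋃ k ∈ K, Metric.closedBall k (ε i.castSucc)) ∩ Metric.closedBall x (ε i.succ) := by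
    intro z hz
    exact ⟨Set.mem_biUnion hxK hz, Metric.closedBall_subset_closedBall hrR.le hz⟩
  obtain ⟨z, hz1, hz2⟩ := Set.exists_of_ssubset (hsub.ssubset_of_ne (Ne.symm hxne))
  obtain ⟨hzU, hzx⟩ := hz1
  rw [Metric.mem_closedBall] at hzx
  have hz2' : ¬ dist z x ≤ ε i.castSucc := fun h => hz2 (Metric.mem_closedBall.mpr h)
  rw [Set.mem_iUnion₂] at hzU
  obtain ⟨b, hbK, hzb⟩ := hzU
  rw [Metric.mem_closedBall] at hzb
  have hxb : dist x b = ε i.succ := by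
    apply hgap
    · by_contra h
      push_neg at h
      exact hz2' (le_trans (hultra z b x) (max_le hzb (by rw [dist_comm]; exact h)))
    · exact le_trans (hultra x z b)
        (max_le (by rw [dist_comm]; exact hzx) (le_trans hzb hrR.le))
  -- now prove parallelism
  intro x' hx'
  rw [Set.inter_eq_right]
  intro y hyB
  by_contra hyU
  rw [Metric.mem_closedBall] at hyB
  have hyK : ∀ k ∈ K, ¬ dist y k ≤ ε i.castSucc := by
    intro k hk hle
    exact hyU (Set.mem_biUnion hk (Metric.mem_closedBall.mpr hle))
  obtain ⟨C, χ, hχs, hχ⟩ := hK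
  have hKid : Set.BijOn χ K Set.univ := by
    have h := hχ (IsometryEquiv.refl X)
    have himg : (⇑(IsometryEquiv.refl X) '' K) = K := by
      ext a
      constructor
      · rintro ⟨c, hc, hca⟩; exact hca ▸ hc
      · intro ha; exact ⟨a, ha, rfl⟩
    rwa [himg] at h
  obtain ⟨u, hu1⟩ := hhom x' y
  have hpu : dist x' (u x') ≤ ε i.succ := by
    rw [hu1, dist_comm]; exact hyB
  obtain ⟨σ, hσ1, hσ2⟩ := local_move hultra u x' (ε i.castSucc) (ε i.succ) h0r hpu hgap
  have hσx' : σ x' = y := by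
    rw [hσ1 x' (by rw [dist_self]; exact h0r)]; exact hu1
  obtain ⟨k, hkK, hkχ⟩ := hKid.surjOn (Set.mem_univ (χ y))
  have hkny : k ≠ y := by
    intro h
    exact hyK y (h ▸ hkK) (by rw [dist_self]; exact h0r)
  by_cases hk1 : dist k x' ≤ ε i.castSucc
  · -- main case: build an isometry sending `x ↦ k`, `b ↦ y`
    have hkyd : dist k y = ε i.succ := by
      apply hgap
      · exact not_le.mp (fun h => hyK k hkK (by rw [dist_comm]; exact h))
      · exact le_trans (hultra k x' y)
          (max_le (le_trans hk1 hrR.le) (by rw [dist_comm]; exact hyB))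
    obtain ⟨u₁, hu₁⟩ := hhom x k
    have hb₁ : dist k (u₁ b) = ε i.succ := by
      rw [← hu₁, u₁.dist_eq]; exact hxb
    obtain ⟨u₂, hu₂⟩ := hhom (u₁ b) y
    have hb₁y : dist (u₁ b) y ≤ ε i.succ :=
      le_trans (hultra (u₁ b) k y)
        (max_le (le_of_eq ((dist_comm (u₁ b) k).trans hb₁)) (le_of_eq hkyd))
    have hpu₂ : dist (u₁ b) (u₂ (u₁ b)) ≤ ε i.succ := by rw [hu₂]; exact hb₁y
    obtain ⟨τ, hτ1, hτ2⟩ :=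
      local_move hultra u₂ (u₁ b) (ε i.castSucc) (ε i.succ) h0r hpu₂ hgap
    have hτb : τ (u₁ b) = y := by
      rw [hτ1 (u₁ b) (by rw [dist_self]; exact h0r)]; exact hu₂
    have hτk : τ k = k := by
      apply hτ2
      · rw [hb₁]; exact not_le.mpr hrR
      · rw [hu₂, hkyd]; exact not_le.mpr hrR
    set w : X ≃ᵢ X := u₁.trans τ with hwdef
    have hwx : w x = k := by
      rw [hwdef, IsometryEquiv.trans_apply, hu₁, hτk]
    have hwb : w b = y := by
      rw [hwdef, IsometryEquiv.trans_apply, hτb]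
    have hinj := (hχ w).injOn
    have heq : w x = w b :=
      hinj ⟨x, hxK, rfl⟩ ⟨b, hbK, rfl⟩ (by rw [hwx, hwb, hkχ])
    rw [hwx, hwb] at heq
    exact hkny heq
  · -- `k` is fixed by the swap `σ`, but `σ x' = y` has the same color
    have hk2 : ¬ dist k (u x') ≤ ε i.castSucc := by
      rw [hu1]
      exact fun h => hyK k hkK (by rw [dist_comm]; exact h)
    have hσk : σ k = k := hσ2 k hk1 hk2
    have hinj := (hχ σ).injOn
    have hky2 : k = y := hinj ⟨k, hkK, hσk⟩ ⟨x', hx', hσx'⟩ hkχ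
    exact hkny hky2
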